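/- For all ω > 0, η > 0, the function f(x) = (ω/(ω+3η))·[ω·x^(ω−1) + (2η − 8ωη·ln x)·x^(2ω−1)] is nonnegative on (0,1] and integrates to 1 over (0,1); i.e., f is a probability density function on the unit interval. -/

import Mathlib

open Real MeasureTheory

theorem ush_pdf_is_density (ω η : ℝ) (hω : 0 < ω) (hη : 0 < η) :
    (∀ x ∈ Set.Ioc (0:ℝ) 1,
      0 ≤ ω / (ω + 3*η) * (ω * x ^ (ω-1) + (2*η - 8*ω*η*Real.log x) * x ^ (2*ω-1))) ∧
    ∫ x in (0:ℝ)..1,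
      ω / (ω + 3*η) * (ω * x ^ (ω-1) + (2*η - 8*ω*η*Real.log x) * x ^ (2*ω-1)) = 1 := by
  have hden : (0:ℝ) < ω + 3*η := by linarith
  constructor
  · intro x hx
    have hl : Real.log x ≤ 0 := Real.log_nonpos hx.1.le hx.2
    have h1 : 0 ≤ ω * x ^ (ω-1) := mul_nonneg hω.le (Real.rpow_nonneg hx.1.le _)
    have h2 : 0 ≤ (2*η - 8*ω*η*Real.log x) := by
      nlinarith [mul_nonneg (mul_nonneg hω.le hη.le) (neg_nonneg.2 hl)]
    have h3 : 0 ≤ (2*η - 8*ω*η*Real.log x) * x ^ (2*ω-1) :=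
      mul_nonneg h2 (Real.rpow_nonneg hx.1.le _)
    exact mul_nonneg (div_nonneg hω.le hden.le) (by linarith)
  · -- antiderivative
    set G : ℝ → ℝ := fun x => x ^ ω + (3*η/ω) * x ^ (2*ω) - 4*η * (Real.log x * x ^ (2*ω))
      with hG
    have hcont : ContinuousOn G (Set.Icc 0 1) := by
      intro x hx
      rcases eq_or_ne x 0 with rfl | hx0
      · -- continuity at 0 within the set
        have t1 : ContinuousWithinAt (fun x : ℝ => x ^ ω) (Set.Icc (0:ℝ) 1) 0 :=
          (Real.continuousAt_rpow_const 0 ω (Or.inr hω.le)).continuousWithinAt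
        have t2 : ContinuousWithinAt (fun x : ℝ => x ^ (2*ω)) (Set.Icc (0:ℝ) 1) 0 :=
          (Real.continuousAt_rpow_const 0 (2*ω) (Or.inr (by linarith))).continuousWithinAt
        have t3 : ContinuousWithinAt (fun x : ℝ => Real.log x * x ^ (2*ω))
            (Set.Icc (0:ℝ) 1) 0 := by
          have h0 : (fun x : ℝ => Real.log x * x ^ (2*ω)) 0 = 0 := by
            simp [Real.log_zero]
          have := tendsto_log_mul_rpow_nhdsGT_zero (by linarith : (0:ℝ) < 2*ω)
          have hIoi : ContinuousWithinAt (fun x : ℝ => Real.log x * x ^ (2*ω))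
              (Set.Ioi (0:ℝ)) 0 := by
            unfold ContinuousWithinAt
            rw [h0]
            exact this
          have hIci := continuousWithinAt_Ioi_iff_Ici.mp hIoi
          exact hIci.mono (fun y hy => hy.1)
        exact (t1.add (t2.const_smul (3*η/ω))).sub (t3.const_smul (4*η))
      · have hx' : ContinuousAt G x := by
          have c1 : ContinuousAt (fun x : ℝ => x ^ ω) x :=
            Real.continuousAt_rpow_const x ω (Or.inl hx0)
          have c2 : ContinuousAt (fun x : ℝ => x ^ (2*ω)) x :=
            Real.continuousAt_rpow_const x (2*ω) (Or.inl hx0)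
          have c3 : ContinuousAt Real.log x := Real.continuousAt_log hx0
          exact (c1.add (c2.const_smul (3*η/ω))).sub ((c3.mul c2).const_smul (4*η))
        exact hx'.continuousWithinAt
    have hderiv : ∀ x ∈ Set.Ioo (0:ℝ) 1, HasDerivWithinAt G
        (ω * x ^ (ω-1) + (2*η - 8*ω*η*Real.log x) * x ^ (2*ω-1)) (Set.Ioi x) x := by
      intro x hx
      have hx0 : x ≠ 0 := hx.1.ne'
      have d1 : HasDerivAt (fun x : ℝ => x ^ ω) (ω * x ^ (ω-1)) x :=
        Real.hasDerivAt_rpow_const (Or.inl hx0)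
      have d2 : HasDerivAt (fun x : ℝ => x ^ (2*ω)) (2*ω * x ^ (2*ω-1)) x :=
        Real.hasDerivAt_rpow_const (Or.inl hx0)
      have d3 : HasDerivAt Real.log x⁻¹ x := Real.hasDerivAt_log hx0
      have d4 : HasDerivAt (fun x : ℝ => Real.log x * x ^ (2*ω))
          (x⁻¹ * x ^ (2*ω) + Real.log x * (2*ω * x ^ (2*ω-1))) x := d3.mul d2
      have dG : HasDerivAt G
          ((ω * x ^ (ω-1) + (3*η/ω) * (2*ω * x ^ (2*ω-1))) -
            4*η * (x⁻¹ * x ^ (2*ω) + Real.log x * (2*ω * x ^ (2*ω-1)))) x :=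
        (d1.add (d2.const_mul (3*η/ω))).sub (d4.const_mul (4*η))
      have key : x ^ (2*ω) = x ^ (2*ω-1) * x := by
        rw [← Real.rpow_add_one hx0]
        ring_nf
      have : (ω * x ^ (ω-1) + (3*η/ω) * (2*ω * x ^ (2*ω-1))) -
            4*η * (x⁻¹ * x ^ (2*ω) + Real.log x * (2*ω * x ^ (2*ω-1)))
          = ω * x ^ (ω-1) + (2*η - 8*ω*η*Real.log x) * x ^ (2*ω-1) := by
        rw [key]
        field_simp
        ring
      rw [this] at dG
      exact dG.hasDerivWithinAt
    have hIω : IntervalIntegrable (fun x : ℝ => x ^ (ω-1)) volume 0 1 :=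
      intervalIntegral.intervalIntegrable_rpow' (by linarith)
    have hI2ω : IntervalIntegrable (fun x : ℝ => x ^ (2*ω-1)) volume 0 1 :=
      intervalIntegral.intervalIntegrable_rpow' (by linarith)
    have hIlog : IntervalIntegrable (fun x : ℝ => Real.log x * x ^ (2*ω-1)) volume 0 1 := by
      rw [intervalIntegrable_iff_integrableOn_Ioc_of_le zero_le_one]
      have hg : MeasureTheory.IntegrableOn (fun x : ℝ => (1/ω) * x ^ (ω-1))
          (Set.Ioc 0 1) MeasureTheory.volume := by
        exact ((intervalIntegrable_iff_integrableOn_Ioc_of_le zero_le_one).mp hIω).const_mul _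
      refine MeasureTheory.Integrable.mono hg ?_ ?_
      · -- measurability
        apply ContinuousOn.aestronglyMeasurable _ measurableSet_Ioc
        intro x hx
        have hx0 : x ≠ 0 := hx.1.ne'
        exact ((Real.continuousAt_log hx0).mul
          (Real.continuousAt_rpow_const x _ (Or.inl hx0))).continuousWithinAt
      · refine (MeasureTheory.ae_restrict_mem measurableSet_Ioc).mono fun x hx => ?_
        have hxp : (0:ℝ) < x := hx.1
        have hx1 : x ≤ 1 := hx.2
        have hl : Real.log x ≤ 0 := Real.log_nonpos hxp.le hx1
        have hb : -Real.log x ≤ x ^ (-ω) / ω := by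
          have h1 : Real.log (x ^ (-ω)) ≤ x ^ (-ω) - 1 :=
            Real.log_le_sub_one_of_pos (Real.rpow_pos_of_pos hxp _)
          rw [Real.log_rpow hxp] at h1
          rw [le_div_iff₀ hω]
          nlinarith
        have hkey : x ^ (-ω) * x ^ (2*ω-1) = x ^ (ω-1) := by
          rw [← Real.rpow_add hxp]
          ring_nf
        have hp1 : (0:ℝ) < x ^ (2*ω-1) := Real.rpow_pos_of_pos hxp _
        have hp2 : (0:ℝ) < x ^ (ω-1) := Real.rpow_pos_of_pos hxp _
        rw [Real.norm_eq_abs, Real.norm_eq_abs, abs_mul, abs_mul,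
          abs_of_nonpos hl, abs_of_pos hp1, abs_of_pos hp2,
          abs_of_pos (by positivity : (0:ℝ) < 1/ω)]
        calc -Real.log x * x ^ (2*ω-1) ≤ (x ^ (-ω) / ω) * x ^ (2*ω-1) := by
              exact mul_le_mul_of_nonneg_right hb hp1.le
          _ = 1/ω * x ^ (ω-1) := by rw [div_mul_eq_mul_div, hkey]; ring
    have hIf : IntervalIntegrable
        (fun x : ℝ => ω * x ^ (ω-1) + (2*η - 8*ω*η*Real.log x) * x ^ (2*ω-1)) volume 0 1 := by
      have e : (fun x : ℝ => ω * x ^ (ω-1) + (2*η - 8*ω*η*Real.log x) * x ^ (2*ω-1))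
          = fun x : ℝ => (ω * x ^ (ω-1) + 2*η * x ^ (2*ω-1)) +
              (-(8*ω*η)) * (Real.log x * x ^ (2*ω-1)) := by
        funext x; ring
      rw [e]
      exact ((hIω.const_mul ω).add (hI2ω.const_mul (2*η))).add (hIlog.const_mul _)
    have hFTC : ∫ x in (0:ℝ)..1,
        (ω * x ^ (ω-1) + (2*η - 8*ω*η*Real.log x) * x ^ (2*ω-1)) = G 1 - G 0 :=
      intervalIntegral.integral_eq_sub_of_hasDeriv_right_of_le zero_le_one hcont hderiv hIf
    have hG1 : G 1 = 1 + 3*η/ω := by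
      simp [hG, Real.one_rpow, Real.log_one]
    have hG0 : G 0 = 0 := by
      simp [hG, Real.zero_rpow hω.ne', Real.zero_rpow (by linarith : 2*ω ≠ 0), Real.log_zero]
    rw [intervalIntegral.integral_const_mul, hFTC, hG1, hG0]
    field_simp
    ring
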